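/- Let U, V in SpSt(2n,2k) such that U^+V is invertible and N := (U^+V)^{-1} sqrtm(U^+V V^+U) is well-defined (principal matrix square root exists). Then N is symplectic: N^+N = I_{2k}. Moreover U^+VN is equal to its own symplectic inverse transpose in the sense (U^+VN)^+ = U^+VN. -/

import Mathlib

open Matrix

noncomputable section

/-- The standard symplectic matrix `J = [[0, I],[-I, 0]]` of size `2m`. -/
def Jmat (m : ℕ) : Matrix (Fin m ⊕ Fin m) (Fin m ⊕ Fin m) ℝ :=
  Matrix.fromBlocks 0 1 (-1) 0

/-- The symplectic inverse `A⁺ = J₂ₖᵀ Aᵀ J₂ₙ` of a `2n × 2k` real matrix. -/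
def sympInv {n k : ℕ} (A : Matrix (Fin n ⊕ Fin n) (Fin k ⊕ Fin k) ℝ) :
    Matrix (Fin k ⊕ Fin k) (Fin n ⊕ Fin n) ℝ :=
  (Jmat k)ᵀ * Aᵀ * Jmat n

lemma Jmat_transpose (m : ℕ) : (Jmat m)ᵀ = -Jmat m := by
  simp only [Jmat, Matrix.fromBlocks_transpose, Matrix.fromBlocks_neg]
  simp

lemma Jmat_mul_Jmat (m : ℕ) : Jmat m * Jmat m = -1 := by
  rw [Jmat, Matrix.fromBlocks_multiply, ← Matrix.fromBlocks_one (l := Fin m) (m := Fin m)]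
  rw [show -Matrix.fromBlocks (1 : Matrix (Fin m) (Fin m) ℝ) 0 0 1 =
    Matrix.fromBlocks (-1) (-0) (-0) (-1) from Matrix.fromBlocks_neg _ _ _ _]
  simp

lemma JmatT_mul_Jmat (m : ℕ) : (Jmat m)ᵀ * Jmat m = 1 := by
  rw [Jmat_transpose, neg_mul, Jmat_mul_Jmat, neg_neg]

lemma Jmat_mul_JmatT (m : ℕ) : Jmat m * (Jmat m)ᵀ = 1 := by
  rw [Jmat_transpose, mul_neg, Jmat_mul_Jmat, neg_neg]

lemma sympInv_mul {n m k : ℕ} (A : Matrix (Fin n ⊕ Fin n) (Fin m ⊕ Fin m) ℝ)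
    (B : Matrix (Fin m ⊕ Fin m) (Fin k ⊕ Fin k) ℝ) :
    sympInv (A * B) = sympInv B * sympInv A := by
  unfold sympInv
  rw [Matrix.transpose_mul]
  simp only [Matrix.mul_assoc]
  rw [← Matrix.mul_assoc (Jmat m) (Jmat m)ᵀ, Jmat_mul_JmatT, Matrix.one_mul]

lemma sympInv_sympInv {n k : ℕ} (A : Matrix (Fin n ⊕ Fin n) (Fin k ⊕ Fin k) ℝ) :
    sympInv (sympInv A) = A := by
  unfold sympInv
  simp only [Matrix.transpose_mul, Matrix.transpose_transpose, Matrix.mul_assoc]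
  rw [Jmat_transpose]
  simp [← Matrix.mul_assoc, Jmat_mul_Jmat]

lemma sympInv_one {k : ℕ} : sympInv (1 : Matrix (Fin k ⊕ Fin k) (Fin k ⊕ Fin k) ℝ) = 1 := by
  unfold sympInv
  simp [JmatT_mul_Jmat]

lemma isUnit_det_Jmat (m : ℕ) : IsUnit (Jmat m).det :=
  IsUnit.of_mul_eq_one (Jmat m)ᵀ.det
    (by rw [← Matrix.det_mul, Jmat_mul_JmatT, Matrix.det_one])

lemma isUnit_det_sympInv {k : ℕ} (A : Matrix (Fin k ⊕ Fin k) (Fin k ⊕ Fin k) ℝ)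
    (h : IsUnit A.det) : IsUnit (sympInv A).det := by
  unfold sympInv
  simp only [Matrix.det_mul, Matrix.det_transpose]
  exact ((isUnit_det_Jmat k).mul h).mul (isUnit_det_Jmat k)

theorem stmt_19 (n k : ℕ) (U V : Matrix (Fin n ⊕ Fin n) (Fin k ⊕ Fin k) ℝ)
    (hU : sympInv U * U = 1) (hV : sympInv V * V = 1)
    (hInv : IsUnit (sympInv U * V))
    (S : Matrix (Fin k ⊕ Fin k) (Fin k ⊕ Fin k) ℝ)
    (hS2 : S * S = sympInv U * V * (sympInv V * U))
    (hSplus : sympInv S = S)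
    (N : Matrix (Fin k ⊕ Fin k) (Fin k ⊕ Fin k) ℝ)
    (hN : N = (sympInv U * V)⁻¹ * S) :
    sympInv N * N = 1 ∧ sympInv (sympInv U * V * N) = sympInv U * V * N := by
  set A := sympInv U * V with hA
  have hsA : sympInv A = sympInv V * U := by
    rw [hA, sympInv_mul, sympInv_sympInv]
  have hAdet : IsUnit A.det := (Matrix.isUnit_iff_isUnit_det A).mp hInv
  have hAr : A * A⁻¹ = 1 := Matrix.mul_nonsing_inv A hAdet
  have hsAu : IsUnit (sympInv A) :=
    (Matrix.isUnit_iff_isUnit_det _).mpr (isUnit_det_sympInv A hAdet)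
  have hSSu : IsUnit (S * S) := by
    rw [hS2, ← hsA]; exact hInv.mul hsAu
  have hSdet : IsUnit S.det := by
    have := (Matrix.isUnit_iff_isUnit_det _).mp hSSu
    rw [Matrix.det_mul] at this
    exact isUnit_of_mul_isUnit_left this
  have hSl : S⁻¹ * S = 1 := Matrix.nonsing_inv_mul S hSdet
  have hSr : S * S⁻¹ = 1 := Matrix.mul_nonsing_inv S hSdet
  have hsAinv : sympInv (A⁻¹) = (sympInv A)⁻¹ := by
    refine (Matrix.inv_eq_left_inv ?_).symm
    rw [← sympInv_mul, hAr, sympInv_one]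
  have hAN : A * N = S := by
    rw [hN, ← mul_assoc, hAr, one_mul]
  constructor
  · have hsN : sympInv N = S * (sympInv A)⁻¹ := by
      rw [hN, sympInv_mul, hSplus, hsAinv]
    rw [hsN, hN]
    have hSS : S * S = A * sympInv A := by rw [hS2, hsA]
    calc S * (sympInv A)⁻¹ * (A⁻¹ * S) = S * ((sympInv A)⁻¹ * A⁻¹) * S := by noncomm_ring
      _ = S * (A * sympInv A)⁻¹ * S := by rw [Matrix.mul_inv_rev]
      _ = S * (S * S)⁻¹ * S := by rw [hSS]
      _ = 1 := by
          rw [Matrix.mul_inv_rev, ← Matrix.mul_assoc, hSr, one_mul, hSl]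
  · rw [hAN, hSplus]
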